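/- For every positive integer n, every real σ > 0, and complex s with Re(s) = σ, |(η(s)/s)·∑_{k=1}^n μ(k)/k^s − (1 − 2^(1−s))/s| ≤ (sup_{x ≥ n} |1 + f_n(x)|)/(σ·n^σ), where f_n(x) = ∑_{k=1}^n μ(k)·ν(x/k). -/

import Mathlib

open MeasureTheory

noncomputable def nu (x : ℝ) : ℝ := 2 * Int.fract (x / 2) - Int.fract x

noncomputable def fn (n : ℕ) (x : ℝ) : ℝ :=
  ∑ k ∈ Finset.Icc 1 n, (ArithmeticFunction.moebius k : ℝ) * nu (x / k)

noncomputable def eta (s : ℂ) : ℂ :=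
  ∑' k : ℕ, ((2 * ((k : ℂ) + 1) - 1) ^ (-s) - (2 * ((k : ℂ) + 1)) ^ (-s))

section Aux
open Finset ArithmeticFunction Set

open scoped Real

/-! ### Number-theoretic lemmas -/

lemma sum_divisors_moebius' (m : ℕ) :
    ∑ k ∈ m.divisors, (ArithmeticFunction.moebius k : ℤ) = if m = 1 then 1 else 0 := by
  have := congrArg (fun f : ArithmeticFunction ℤ => f m) ArithmeticFunction.moebius_mul_coe_zeta
  simp only [ArithmeticFunction.coe_mul_zeta_apply, ArithmeticFunction.one_apply] at this
  exact this

lemma sum_moebius_div_nat (N : ℕ) (hN : 1 ≤ N) :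
    ∑ k ∈ Finset.Icc 1 N, (ArithmeticFunction.moebius k : ℤ) * (N / k : ℕ) = 1 := by
  have hIcc : Finset.Icc 1 N = Finset.Ioc 0 N := rfl
  calc ∑ k ∈ Finset.Icc 1 N, (ArithmeticFunction.moebius k : ℤ) * (N / k : ℕ)
      = ∑ k ∈ Finset.Ioc 0 N, ∑ m ∈ Finset.Ioc 0 N,
          (if k ∣ m then (ArithmeticFunction.moebius k : ℤ) else 0) := by
        rw [hIcc]
        refine Finset.sum_congr rfl fun k _ => ?_
        rw [← Finset.sum_filter, Finset.sum_const, ← Nat.Ioc_filter_dvd_card_eq_div N k]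
        ring
    _ = ∑ m ∈ Finset.Ioc 0 N, ∑ k ∈ Finset.Ioc 0 N,
          (if k ∣ m then (ArithmeticFunction.moebius k : ℤ) else 0) := Finset.sum_comm
    _ = ∑ m ∈ Finset.Ioc 0 N, ∑ k ∈ m.divisors, (ArithmeticFunction.moebius k : ℤ) := by
        refine Finset.sum_congr rfl fun m hm => ?_
        rw [Finset.mem_Ioc] at hm
        rw [← Finset.sum_filter]
        congr 1
        ext k
        simp only [Finset.mem_filter, Finset.mem_Ioc, Nat.mem_divisors]
        constructor
        · rintro ⟨⟨hk0, hkN⟩, hkm⟩; exact ⟨hkm, hm.1.ne'⟩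
        · rintro ⟨hkm, _⟩
          exact ⟨⟨Nat.pos_of_dvd_of_pos hkm hm.1, (Nat.le_of_dvd hm.1 hkm).trans hm.2⟩, hkm⟩
    _ = ∑ m ∈ Finset.Ioc 0 N, (if m = 1 then 1 else 0 : ℤ) :=
        Finset.sum_congr rfl fun m _ => sum_divisors_moebius' m
    _ = 1 := by
        rw [Finset.sum_ite_eq' (Finset.Ioc 0 N) 1 (fun _ => (1:ℤ))]
        simp [hN]

lemma sum_moebius_floor (n : ℕ) (x : ℝ) (hx : 1 ≤ x) (hxn : x < n + 1) :
    ∑ k ∈ Finset.Icc 1 n, (ArithmeticFunction.moebius k : ℝ) * (⌊x / k⌋₊ : ℝ) = 1 := by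
  have hx0 : (0:ℝ) ≤ x := le_trans zero_le_one hx
  have hN1 : 1 ≤ ⌊x⌋₊ := (Nat.one_le_floor_iff x).mpr hx
  have hNn : ⌊x⌋₊ ≤ n := by
    have h1 : ⌊x⌋₊ < n + 1 := by
      rw [Nat.floor_lt hx0]; push_cast; exact hxn
    omega
  have key := sum_moebius_div_nat ⌊x⌋₊ hN1
  have hzero : ∀ k ∈ Finset.Icc 1 n, k ∉ Finset.Icc 1 ⌊x⌋₊ →
      (ArithmeticFunction.moebius k : ℤ) * (⌊x⌋₊ / k : ℕ) = 0 := by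
    intro k hk hk'
    simp only [Finset.mem_Icc] at hk hk'
    have : ⌊x⌋₊ < k := by omega
    rw [Nat.div_eq_of_lt this]
    simp
  have hsub : Finset.Icc 1 ⌊x⌋₊ ⊆ Finset.Icc 1 n := Finset.Icc_subset_Icc_right hNn
  have hZ : ∑ k ∈ Finset.Icc 1 n, (ArithmeticFunction.moebius k : ℤ) * (⌊x⌋₊ / k : ℕ) = 1 := by
    rw [← Finset.sum_subset hsub hzero]; exact key
  have hterm : ∀ k : ℕ, (⌊x / k⌋₊ : ℝ) = ((⌊x⌋₊ / k : ℕ) : ℝ) := by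
    intro k; rw [Nat.floor_div_natCast x k]
  calc ∑ k ∈ Finset.Icc 1 n, (ArithmeticFunction.moebius k : ℝ) * (⌊x / k⌋₊ : ℝ)
      = ∑ k ∈ Finset.Icc 1 n,
          (((ArithmeticFunction.moebius k : ℤ) * (⌊x⌋₊ / k : ℕ) : ℤ) : ℝ) := by
        refine Finset.sum_congr rfl fun k _ => ?_
        rw [hterm k, Int.cast_mul, Int.cast_natCast]
    _ = 1 := by rw [← Int.cast_sum, hZ]; norm_num

/-! ### Lemmas about `nu` -/

lemma nu_of_nonneg {x : ℝ} (hx : 0 ≤ x) :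
    nu x = ((⌊x⌋₊ % 2 : ℕ) : ℝ) := by
  have h2 : (0:ℝ) ≤ x / 2 := by positivity
  have hf1 : Int.fract x = x - (⌊x⌋₊ : ℝ) := by
    rw [Int.fract, natCast_floor_eq_intCast_floor hx]
  have hf2 : Int.fract (x / 2) = x / 2 - ((⌊x⌋₊ / 2 : ℕ) : ℝ) := by
    rw [Int.fract, ← natCast_floor_eq_intCast_floor h2, Nat.floor_div_ofNat x 2]
  have hmod := Nat.div_add_mod ⌊x⌋₊ 2
  have : ((2 * (⌊x⌋₊ / 2) + ⌊x⌋₊ % 2 : ℕ) : ℝ) = ((⌊x⌋₊ : ℕ) : ℝ) := by rw [hmod]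
  push_cast at this
  rw [nu, hf1, hf2]
  linarith

lemma nu_nonneg {x : ℝ} (hx : 0 ≤ x) : 0 ≤ nu x := by
  rw [nu_of_nonneg hx]; positivity

lemma nu_le_one {x : ℝ} (hx : 0 ≤ x) : nu x ≤ 1 := by
  rw [nu_of_nonneg hx]
  have : ⌊x⌋₊ % 2 ≤ 1 := Nat.lt_succ_iff.mp (Nat.mod_lt _ (by norm_num))
  exact_mod_cast this

lemma nu_abs_le_one {x : ℝ} (hx : 0 ≤ x) : |nu x| ≤ 1 :=
  abs_le.mpr ⟨by linarith [nu_nonneg hx], nu_le_one hx⟩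

lemma nu_eq_floor {x : ℝ} (hx : 0 ≤ x) :
    nu x = (⌊x⌋₊ : ℝ) - 2 * ((⌊x⌋₊ / 2 : ℕ) : ℝ) := by
  rw [nu_of_nonneg hx]
  have hmod := Nat.div_add_mod ⌊x⌋₊ 2
  have : ((2 * (⌊x⌋₊ / 2) + ⌊x⌋₊ % 2 : ℕ) : ℝ) = ((⌊x⌋₊ : ℕ) : ℝ) := by rw [hmod]
  push_cast at this ⊢
  linarith

lemma nu_eq_zero {x : ℝ} (hx : 0 ≤ x) (h : x < 1) : nu x = 0 := by
  rw [nu_of_nonneg hx, Nat.floor_eq_zero.mpr h]; norm_num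

lemma measurable_nu : Measurable nu :=
  ((measurable_fract.comp (measurable_id.div_const 2)).const_mul 2).sub measurable_fract

lemma measurable_fn (n : ℕ) : Measurable (fn n) := by
  apply Finset.measurable_sum (f := fun k x => (ArithmeticFunction.moebius k : ℝ) * nu (x / k))
  intro k _
  exact (measurable_nu.comp (measurable_id.div_const (k : ℝ))).const_mul _

lemma nu_indicator {x : ℝ} (hx : 0 ≤ x) :
    nu x = Set.indicator (⋃ k : ℕ, Set.Ico (2 * (k:ℝ) + 1) (2 * (k:ℝ) + 2)) 1 x := by
  by_cases hU : x ∈ ⋃ k : ℕ, Set.Ico (2 * (k:ℝ) + 1) (2 * (k:ℝ) + 2)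
  · rw [Set.indicator_of_mem hU]
    obtain ⟨_, ⟨k, rfl⟩, hk1, hk2⟩ := hU
    have hfl : ⌊x⌋₊ = 2 * k + 1 := by
      rw [Nat.floor_eq_iff hx]; push_cast; exact ⟨hk1, by linarith⟩
    rw [nu_of_nonneg hx, hfl]
    simp [Nat.add_mul_mod_self_left, Nat.mul_add_mod]
  · rw [Set.indicator_of_notMem hU, nu_of_nonneg hx]
    rcases Nat.mod_two_eq_zero_or_one ⌊x⌋₊ with h | h
    · rw [h]; norm_num
    · exfalso
      obtain ⟨k, hk⟩ : ∃ k, ⌊x⌋₊ = 2 * k + 1 := ⟨⌊x⌋₊ / 2, by omega⟩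
      apply hU
      refine Set.mem_iUnion.mpr ⟨k, ?_⟩
      constructor
      · have := Nat.floor_le hx
        rw [hk] at this; push_cast at this; linarith
      · have := Nat.lt_floor_add_one x
        rw [hk] at this; push_cast at this; linarith

/-! ### Lemmas about `fn` -/

lemma fn_formula (n : ℕ) (x : ℝ) (hx : 0 ≤ x) :
    fn n x = (∑ k ∈ Finset.Icc 1 n, (ArithmeticFunction.moebius k : ℝ) * (⌊x / k⌋₊ : ℝ))
      - 2 * ∑ k ∈ Finset.Icc 1 n, (ArithmeticFunction.moebius k : ℝ) * (⌊(x / 2) / k⌋₊ : ℝ) := by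
  rw [fn, Finset.mul_sum, ← Finset.sum_sub_distrib]
  refine Finset.sum_congr rfl fun k hk => ?_
  have hk1 : 1 ≤ k := (Finset.mem_Icc.mp hk).1
  have hxk : 0 ≤ x / k := by positivity
  rw [nu_eq_floor hxk, ← Nat.floor_div_ofNat (x / k) 2, div_div, mul_comm (k:ℝ) 2,
    ← div_div]
  ring

lemma fn_eq_one {n : ℕ} {x : ℝ} (hn : 1 ≤ n) (hx : 1 ≤ x) (hx2 : x < 2) : fn n x = 1 := by
  have hx0 : (0:ℝ) ≤ x := by linarith
  rw [fn_formula n x hx0, sum_moebius_floor n x hx (by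
    have : (1:ℝ) ≤ n := by exact_mod_cast hn
    linarith)]
  have : ∀ k ∈ Finset.Icc 1 n, (ArithmeticFunction.moebius k : ℝ) * (⌊(x / 2) / k⌋₊ : ℝ) = 0 := by
    intro k hk
    have hk1 : 1 ≤ k := (Finset.mem_Icc.mp hk).1
    have h1 : (x / 2) / k < 1 := by
      have hk1' : (1:ℝ) ≤ k := by exact_mod_cast hk1
      have : x / 2 < 1 := by linarith
      have h0 : 0 ≤ x / 2 := by positivity
      calc (x / 2) / k ≤ x / 2 / 1 := by
            apply div_le_div_of_nonneg_left h0 ?_ hk1'; norm_num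
        _ < 1 := by simpa using this
    rw [Nat.floor_eq_zero.mpr h1]
    simp
  rw [Finset.sum_congr rfl this]
  simp

lemma fn_eq_neg_one {n : ℕ} {x : ℝ} (hx : 2 ≤ x) (hxn : x < n + 1) : fn n x = -1 := by
  have hx0 : (0:ℝ) ≤ x := by linarith
  rw [fn_formula n x hx0, sum_moebius_floor n x (by linarith) hxn,
    sum_moebius_floor n (x / 2) (by linarith) (by linarith)]
  norm_num

lemma fn_abs_le (n : ℕ) (x : ℝ) (hx : 0 ≤ x) : |fn n x| ≤ n := by
  rw [fn]
  calc |∑ k ∈ Finset.Icc 1 n, (ArithmeticFunction.moebius k : ℝ) * nu (x / k)|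
      ≤ ∑ k ∈ Finset.Icc 1 n, |(ArithmeticFunction.moebius k : ℝ) * nu (x / k)| :=
        Finset.abs_sum_le_sum_abs _ _
    _ ≤ ∑ k ∈ Finset.Icc 1 n, 1 := by
        refine Finset.sum_le_sum fun k hk => ?_
        have hk1 : 1 ≤ k := (Finset.mem_Icc.mp hk).1
        have hxk : 0 ≤ x / k := by positivity
        rw [abs_mul]
        have h1 : |(ArithmeticFunction.moebius k : ℝ)| ≤ 1 := by
          have := ArithmeticFunction.abs_moebius_le_one (n := k)
          calc |(ArithmeticFunction.moebius k : ℝ)|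
              = ((|ArithmeticFunction.moebius k| : ℤ) : ℝ) := by push_cast; rfl
            _ ≤ 1 := by exact_mod_cast this
        calc |(ArithmeticFunction.moebius k : ℝ)| * |nu (x / k)| ≤ 1 * 1 :=
              mul_le_mul h1 (nu_abs_le_one hxk) (abs_nonneg _) zero_le_one
          _ = 1 := by norm_num
    _ ≤ n := by simp [Nat.card_Icc]

/-! ### Integral lemmas -/

lemma gAESM (s : ℂ) {c : ℝ} (hc : 0 < c) :
    AEStronglyMeasurable (fun x : ℝ => (x : ℂ) ^ (-s - 1)) (volume.restrict (Set.Ioi c)) := by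
  refine ContinuousOn.aestronglyMeasurable (fun t ht => ?_) measurableSet_Ioi
  exact (Complex.continuousAt_ofReal_cpow_const _ _ (Or.inr (hc.trans ht).ne')).continuousWithinAt

lemma g_re (s : ℂ) : (-s - 1).re = -s.re - 1 := by simp

lemma g_norm {s : ℂ} {x : ℝ} (hx : 0 < x) :
    ‖(x : ℂ) ^ (-s - 1)‖ = x ^ (-s.re - 1) := by
  rw [Complex.norm_cpow_eq_rpow_re_of_pos hx, g_re]

lemma integral_g_Ioi {s : ℂ} (hσ : 0 < s.re) {c : ℝ} (hc : 0 < c) :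
    ∫ x in Set.Ioi c, (x : ℂ) ^ (-s - 1) = (c : ℂ) ^ (-s) / s := by
  have h1 : (-s - 1).re < -1 := by rw [g_re]; linarith
  rw [integral_Ioi_cpow_of_lt h1 hc]
  have h2 : -s - 1 + 1 = -s := by ring
  rw [h2, neg_div_neg_eq]

lemma integrableOn_g_Ioi {s : ℂ} (hσ : 0 < s.re) {c : ℝ} (hc : 0 < c) :
    IntegrableOn (fun x : ℝ => (x : ℂ) ^ (-s - 1)) (Set.Ioi c) :=
  integrableOn_Ioi_cpow_of_lt (by rw [g_re]; linarith) hc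

lemma integral_g_Ioc {s : ℂ} (hσ : 0 < s.re) {c d : ℝ} (hc : 0 < c) (hcd : c ≤ d) :
    ∫ x in Set.Ioc c d, (x : ℂ) ^ (-s - 1) = ((c : ℂ) ^ (-s) - (d : ℂ) ^ (-s)) / s := by
  have hd : 0 < d := lt_of_lt_of_le hc hcd
  have hunion : Set.Ioc c d ∪ Set.Ioi d = Set.Ioi c := Set.Ioc_union_Ioi_eq_Ioi hcd
  have hdisj : Disjoint (Set.Ioc c d) (Set.Ioi d) := Set.Ioc_disjoint_Ioi le_rfl
  have h1 : IntegrableOn (fun x : ℝ => (x : ℂ) ^ (-s - 1)) (Set.Ioc c d) :=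
    (integrableOn_g_Ioi hσ hc).mono_set (fun x hx => hx.1)
  have h2 : IntegrableOn (fun x : ℝ => (x : ℂ) ^ (-s - 1)) (Set.Ioi d) :=
    integrableOn_g_Ioi hσ hd
  have := setIntegral_union hdisj measurableSet_Ioi h1 h2
  rw [hunion] at this
  rw [integral_g_Ioi hσ hc, integral_g_Ioi hσ hd] at this
  have : ∫ x in Set.Ioc c d, (x : ℂ) ^ (-s - 1)
      = (c : ℂ) ^ (-s) / s - (d : ℂ) ^ (-s) / s := by linear_combination -this
  rw [this]
  ring


lemma integrableOn_mul_g {s : ℂ} (hσ : 0 < s.re) {c : ℝ} (hc : 0 < c)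
    {f : ℝ → ℝ} (hf : Measurable f) {C : ℝ}
    (hbd : ∀ x ∈ Set.Ioi c, |f x| ≤ C) :
    IntegrableOn (fun x : ℝ => (f x : ℂ) * (x : ℂ) ^ (-s - 1)) (Set.Ioi c) := by
  have hbound : IntegrableOn (fun x : ℝ => C * x ^ (-s.re - 1)) (Set.Ioi c) :=
    (integrableOn_Ioi_rpow_of_lt (by linarith) hc).const_mul C
  refine Integrable.mono' hbound ?_ ?_
  · exact ((Complex.measurable_ofReal.comp hf).aestronglyMeasurable).mul (gAESM s hc)
  · rw [ae_restrict_iff' measurableSet_Ioi]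
    filter_upwards with x
    intro hx
    have hx0 : 0 < x := hc.trans hx
    rw [norm_mul, Complex.norm_real, Real.norm_eq_abs, g_norm hx0]
    exact mul_le_mul_of_nonneg_right (hbd x hx) (Real.rpow_nonneg hx0.le _)

lemma pairwise_disjoint_Ico :
    Pairwise (Function.onFun Disjoint
      (fun k : ℕ => Set.Ico (2 * (k:ℝ) + 1) (2 * (k:ℝ) + 2))) := by
  intro i j hij
  apply Set.disjoint_left.mpr
  rintro x ⟨h1, h2⟩ ⟨h3, h4⟩
  have e1 : (2 * (i:ℝ) + 1) < 2 * (j:ℝ) + 2 := lt_of_le_of_lt h1 h4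
  have e2 : (2 * (j:ℝ) + 1) < 2 * (i:ℝ) + 2 := lt_of_le_of_lt h3 h2
  have n1 : (i:ℝ) < j + 1 := by linarith
  have n2 : (j:ℝ) < i + 1 := by linarith
  have m1 : i < j + 1 := by exact_mod_cast n1
  have m2 : j < i + 1 := by exact_mod_cast n2
  omega

lemma integral_nu_g {s : ℂ} (hσ : 0 < s.re) :
    ∫ x in Set.Ioi (1:ℝ), (nu x : ℂ) * (x : ℂ) ^ (-s - 1) = eta s / s := by
  set U := ⋃ k : ℕ, Set.Ico (2 * (k:ℝ) + 1) (2 * (k:ℝ) + 2) with hU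
  have hUmeas : MeasurableSet U := MeasurableSet.iUnion fun k => measurableSet_Ico
  have hUsub : U ⊆ Set.Ici (1:ℝ) := by
    intro x hx
    obtain ⟨k, h1, _⟩ := Set.mem_iUnion.mp hx
    have : (0:ℝ) ≤ 2 * k := by positivity
    have := h1
    simp only [Set.mem_Ici]
    linarith
  have hgint : IntegrableOn (fun x : ℝ => (x : ℂ) ^ (-s - 1)) U :=
    (integrableOn_g_Ioi hσ one_half_pos).mono_set
      (fun x hx => Set.mem_Ioi.mpr (lt_of_lt_of_le one_half_lt_one (hUsub hx)))
  have hcong : ∀ x ∈ Set.Ici (1:ℝ),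
      (nu x : ℂ) * (x : ℂ) ^ (-s - 1)
        = Set.indicator U (fun x : ℝ => (x : ℂ) ^ (-s - 1)) x := by
    intro x hx
    have hx0 : (0:ℝ) ≤ x := le_trans zero_le_one hx
    rw [nu_indicator hx0, ← hU]
    by_cases hmem : x ∈ U
    · rw [Set.indicator_of_mem hmem, Set.indicator_of_mem hmem]
      norm_num
    · rw [Set.indicator_of_notMem hmem, Set.indicator_of_notMem hmem]
      norm_num
  calc ∫ x in Set.Ioi (1:ℝ), (nu x : ℂ) * (x : ℂ) ^ (-s - 1)
      = ∫ x in Set.Ici (1:ℝ), (nu x : ℂ) * (x : ℂ) ^ (-s - 1) :=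
        setIntegral_congr_set Ioi_ae_eq_Ici
    _ = ∫ x in Set.Ici (1:ℝ), Set.indicator U (fun x : ℝ => (x : ℂ) ^ (-s - 1)) x :=
        setIntegral_congr_fun measurableSet_Ici hcong
    _ = ∫ x in Set.Ici (1:ℝ) ∩ U, (x : ℂ) ^ (-s - 1) := setIntegral_indicator hUmeas
    _ = ∫ x in U, (x : ℂ) ^ (-s - 1) := by
        rw [Set.inter_eq_self_of_subset_right hUsub]
    _ = ∑' k : ℕ, ∫ x in Set.Ico (2 * (k:ℝ) + 1) (2 * (k:ℝ) + 2), (x : ℂ) ^ (-s - 1) :=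
        integral_iUnion (fun k => measurableSet_Ico) pairwise_disjoint_Ico hgint
    _ = ∑' k : ℕ, (((2 * (k:ℝ) + 1 : ℝ) : ℂ) ^ (-s) - ((2 * (k:ℝ) + 2 : ℝ) : ℂ) ^ (-s)) / s := by
        refine tsum_congr fun k => ?_
        have hk1 : (0:ℝ) < 2 * (k:ℝ) + 1 := by positivity
        rw [setIntegral_congr_set Ico_ae_eq_Ioc, integral_g_Ioc hσ hk1 (by linarith)]
    _ = eta s / s := by
        rw [eta, ← tsum_div_const]
        refine tsum_congr fun k => ?_
        have e1 : ((2 * (k:ℝ) + 1 : ℝ) : ℂ) = 2 * ((k : ℂ) + 1) - 1 := by push_cast; ring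
        have e2 : ((2 * (k:ℝ) + 2 : ℝ) : ℂ) = 2 * ((k : ℂ) + 1) := by push_cast; ring
        rw [e1, e2]


lemma integral_nu_div_g {s : ℂ} (hσ : 0 < s.re) {k : ℕ} (hk : 1 ≤ k) :
    ∫ x in Set.Ioi (1:ℝ), (nu (x / k) : ℂ) * (x : ℂ) ^ (-s - 1)
      = (k : ℂ) ^ (-s) * (eta s / s) := by
  have hk0 : (0:ℝ) < k := by exact_mod_cast hk
  have hkinv : (0:ℝ) < (k:ℝ)⁻¹ := by positivity
  have hkinv1 : (k:ℝ)⁻¹ ≤ 1 := by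
    rw [inv_le_one_iff₀]; right; exact_mod_cast hk
  have hkC : (k:ℂ) ≠ 0 := Nat.cast_ne_zero.mpr (by omega)
  set F : ℝ → ℂ := fun y => (nu y : ℂ) * (((k:ℝ) * y : ℝ) : ℂ) ^ (-s - 1) with hF
  have step1 : (fun x : ℝ => (nu (x / k) : ℂ) * (x : ℂ) ^ (-s - 1))
      = fun x : ℝ => F (x * (k:ℝ)⁻¹) := by
    funext x
    rw [hF]
    have h2 : x * (k:ℝ)⁻¹ = x / k := (div_eq_mul_inv x _).symm
    have h3 : (k:ℝ) * (x / k) = x := by field_simp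
    simp only [h2, h3]
  have step2 := integral_comp_mul_right_Ioi F 1 hkinv
  -- compute ∫ y in Ioi k⁻¹, F y
  have hFcong : ∀ y ∈ Set.Ioi ((k:ℝ)⁻¹), F y
      = (k:ℂ) ^ (-s - 1) * ((nu y : ℂ) * (y : ℂ) ^ (-s - 1)) := by
    intro y hy
    have hy0 : (0:ℝ) < y := lt_trans hkinv hy
    rw [hF]
    simp only []
    rw [Complex.ofReal_mul, Complex.mul_cpow_ofReal_nonneg hk0.le hy0.le]
    push_cast
    ring
  have hnuint : ∀ c : ℝ, 0 < c → IntegrableOn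
      (fun y : ℝ => (nu y : ℂ) * (y : ℂ) ^ (-s - 1)) (Set.Ioi c) := by
    intro c hc
    exact integrableOn_mul_g hσ hc measurable_nu
      (fun y hy => nu_abs_le_one (le_of_lt (hc.trans hy)))
  have hzero : ∫ y in Set.Ioc ((k:ℝ)⁻¹) 1, (nu y : ℂ) * (y : ℂ) ^ (-s - 1) = 0 := by
    rw [← setIntegral_congr_set Ioo_ae_eq_Ioc]
    rw [setIntegral_congr_fun measurableSet_Ioo
      (g := fun _ => (0:ℂ)) (fun y hy => ?_)]
    · simp
    · rw [nu_eq_zero (le_of_lt (hkinv.trans hy.1)) hy.2]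
      simp
  have hsplit : ∫ y in Set.Ioi ((k:ℝ)⁻¹), (nu y : ℂ) * (y : ℂ) ^ (-s - 1)
      = eta s / s := by
    have hu := setIntegral_union (Set.Ioc_disjoint_Ioi le_rfl) measurableSet_Ioi
      ((hnuint _ hkinv).mono_set (fun y hy => hy.1))
      (hnuint 1 one_pos)
    rw [Set.Ioc_union_Ioi_eq_Ioi hkinv1] at hu
    rw [hu, hzero, integral_nu_g hσ, zero_add]
  have hmid : ∫ y in Set.Ioi ((k:ℝ)⁻¹), F y
      = (k:ℂ) ^ (-s - 1) * (eta s / s) := by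
    rw [setIntegral_congr_fun measurableSet_Ioi hFcong, integral_const_mul, hsplit]
  rw [step1, step2, one_mul, inv_inv, hmid]
  rw [Complex.real_smul]
  rw [← mul_assoc]
  congr 1
  rw [← Complex.cpow_one ((k:ℝ):ℂ)]
  push_cast
  rw [← Complex.cpow_add _ _ hkC]
  congr 1
  ring

lemma integral_fn_g {s : ℂ} (hσ : 0 < s.re) (n : ℕ) :
    ∫ x in Set.Ioi (1:ℝ), (fn n x : ℂ) * (x : ℂ) ^ (-s - 1)
      = (∑ k ∈ Finset.Icc 1 n, (ArithmeticFunction.moebius k : ℂ) * (k : ℂ) ^ (-s))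
        * (eta s / s) := by
  have hcong : ∀ x : ℝ, (fn n x : ℂ) * (x : ℂ) ^ (-s - 1)
      = ∑ k ∈ Finset.Icc 1 n, (ArithmeticFunction.moebius k : ℂ)
          * ((nu (x / k) : ℂ) * (x : ℂ) ^ (-s - 1)) := by
    intro x
    rw [fn]
    push_cast
    rw [Finset.sum_mul]
    refine Finset.sum_congr rfl fun k _ => ?_
    ring
  simp_rw [hcong]
  rw [integral_finset_sum]
  · rw [Finset.sum_mul]
    refine Finset.sum_congr rfl fun k hk => ?_
    have hk1 : 1 ≤ k := (Finset.mem_Icc.mp hk).1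
    rw [integral_const_mul, integral_nu_div_g hσ hk1]
    ring
  · intro k hk
    have hk1 : 1 ≤ k := (Finset.mem_Icc.mp hk).1
    have hkpos : (0:ℝ) < k := by exact_mod_cast hk1
    refine Integrable.const_mul ?_ _
    exact integrableOn_mul_g hσ one_pos
      (measurable_nu.comp (measurable_id.div_const (k:ℝ)))
      (C := 1) (fun x hx => nu_abs_le_one
        (div_nonneg (le_of_lt (lt_trans one_pos hx)) hkpos.le))

end Aux

theorem stmt_14 : ∀ n : ℕ, 0 < n → ∀ σ : ℝ, 0 < σ → ∀ s : ℂ, s.re = σ →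
    ‖(eta s / s) * (∑ k ∈ Finset.Icc 1 n, (ArithmeticFunction.moebius k : ℂ) / (k : ℂ) ^ s) -
        (1 - 2 ^ (1 - s)) / s‖ ≤
      (⨆ x : {x : ℝ // (n : ℝ) ≤ x}, |1 + fn n x|) / (σ * (n : ℝ) ^ σ) := by
  intro n hn σ hσp s hs
  subst hs
  have hσ : 0 < s.re := hσp
  have hn1 : (1:ℝ) ≤ n := by exact_mod_cast hn
  have hn0 : (0:ℝ) < n := by linarith
  set m : ℝ := max 2 (n:ℝ) with hm
  have hm2 : (2:ℝ) ≤ m := le_max_left _ _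
  have hnm : (n:ℝ) ≤ m := le_max_right _ _
  have hm0 : (0:ℝ) < m := by linarith
  have hm1 : (1:ℝ) ≤ m := by linarith
  have h1fn_meas : Measurable (fun x : ℝ => 1 + fn n x) :=
    measurable_const.add (measurable_fn n)
  have h1fn_bd : ∀ x : ℝ, 0 < x → |1 + fn n x| ≤ 1 + n := by
    intro x hx
    calc |1 + fn n x| ≤ |(1:ℝ)| + |fn n x| := abs_add_le _ _
      _ ≤ 1 + n := by
          have := fn_abs_le n x hx.le
          rw [abs_one]
          linarith
  have hint : ∀ c : ℝ, 0 < c → IntegrableOn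
      (fun x : ℝ => ((1 + fn n x : ℝ) : ℂ) * (x : ℂ) ^ (-s - 1)) (Set.Ioi c) := by
    intro c hc
    exact integrableOn_mul_g hσ hc h1fn_meas
      (C := 1 + n) (fun x hx => h1fn_bd x (hc.trans hx))
  have hfnint : IntegrableOn
      (fun x : ℝ => ((fn n x : ℝ) : ℂ) * (x : ℂ) ^ (-s - 1)) (Set.Ioi 1) :=
    integrableOn_mul_g hσ one_pos (measurable_fn n)
      (C := n) (fun x hx => fn_abs_le n x (le_of_lt (one_pos.trans hx)))
  have hgint : IntegrableOn (fun x : ℝ => (x : ℂ) ^ (-s - 1)) (Set.Ioi 1) :=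
    integrableOn_g_Ioi hσ one_pos
  set M : ℂ := ∑ k ∈ Finset.Icc 1 n, (ArithmeticFunction.moebius k : ℂ) * (k : ℂ) ^ (-s)
    with hM
  have hM' : ∑ k ∈ Finset.Icc 1 n, (ArithmeticFunction.moebius k : ℂ) / (k : ℂ) ^ s = M := by
    rw [hM]
    refine Finset.sum_congr rfl fun k hk => ?_
    rw [Complex.cpow_neg, div_eq_mul_inv]
  -- the integral over (1, ∞)
  have hIoi1 : ∫ x in Set.Ioi (1:ℝ), ((1 + fn n x : ℝ) : ℂ) * (x : ℂ) ^ (-s - 1)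
      = 1 / s + M * (eta s / s) := by
    have hsplit : (fun x : ℝ => ((1 + fn n x : ℝ) : ℂ) * (x : ℂ) ^ (-s - 1))
        = fun x : ℝ => (x : ℂ) ^ (-s - 1) + ((fn n x : ℝ) : ℂ) * (x : ℂ) ^ (-s - 1) := by
      funext x
      push_cast
      ring
    rw [hsplit, integral_add hgint hfnint, integral_g_Ioi hσ one_pos, integral_fn_g hσ n]
    norm_num
    exact Or.inl rfl
  -- splitting at m
  have hsplit1 : ∫ x in Set.Ioi (1:ℝ), ((1 + fn n x : ℝ) : ℂ) * (x : ℂ) ^ (-s - 1)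
      = (∫ x in Set.Ioc (1:ℝ) m, ((1 + fn n x : ℝ) : ℂ) * (x : ℂ) ^ (-s - 1))
        + ∫ x in Set.Ioi m, ((1 + fn n x : ℝ) : ℂ) * (x : ℂ) ^ (-s - 1) := by
    have hu := setIntegral_union (Set.Ioc_disjoint_Ioi le_rfl) measurableSet_Ioi
      ((hint 1 one_pos).mono_set (fun x hx => hx.1)) (hint m hm0)
    rw [Set.Ioc_union_Ioi_eq_Ioi hm1] at hu
    exact hu
  -- integral over (2, m] vanishes
  have hIoc2m : ∫ x in Set.Ioc (2:ℝ) m, ((1 + fn n x : ℝ) : ℂ) * (x : ℂ) ^ (-s - 1) = 0 := by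
    rw [setIntegral_congr_fun measurableSet_Ioc (g := fun _ => (0:ℂ)) (fun x hx => ?_)]
    · simp
    · have hx2 : 2 < x := hx.1
      have hxm : x ≤ m := hx.2
      have hxn : x < n + 1 := by
        rcases max_choice 2 (n:ℝ) with h | h
        · rw [hm, h] at hxm; linarith
        · rw [hm, h] at hxm; linarith
      rw [fn_eq_neg_one hx2.le hxn]
      norm_num
  -- integral over (1, 2]
  have hIoc12 : ∫ x in Set.Ioc (1:ℝ) 2, ((1 + fn n x : ℝ) : ℂ) * (x : ℂ) ^ (-s - 1)
      = 2 * ((((1:ℝ) : ℂ) ^ (-s) - ((2:ℝ) : ℂ) ^ (-s)) / s) := by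
    rw [← setIntegral_congr_set Ioo_ae_eq_Ioc]
    rw [setIntegral_congr_fun measurableSet_Ioo
      (g := fun x : ℝ => 2 * (x : ℂ) ^ (-s - 1)) (fun x hx => ?_)]
    · rw [setIntegral_congr_set Ioo_ae_eq_Ioc, integral_const_mul,
        integral_g_Ioc hσ one_pos one_le_two]
    · rw [fn_eq_one hn hx.1.le hx.2]
      norm_num
  have hIoc1m : ∫ x in Set.Ioc (1:ℝ) m, ((1 + fn n x : ℝ) : ℂ) * (x : ℂ) ^ (-s - 1)
      = 2 * ((((1:ℝ) : ℂ) ^ (-s) - ((2:ℝ) : ℂ) ^ (-s)) / s) := by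
    have hdisj : Disjoint (Set.Ioc (1:ℝ) 2) (Set.Ioc (2:ℝ) m) :=
      Set.Ioc_disjoint_Ioc.mpr (le_trans inf_le_left le_sup_right)
    have hu := setIntegral_union hdisj measurableSet_Ioc
      ((hint 1 one_pos).mono_set (fun x hx => hx.1))
      ((hint 2 two_pos).mono_set (fun x hx => hx.1))
    rw [Set.Ioc_union_Ioc_eq_Ioc one_le_two hm2] at hu
    rw [hu, hIoc12, hIoc2m, add_zero]
  -- the main identity
  have hid : eta s / s * M - (1 - 2 ^ (1 - s)) / s
      = ∫ x in Set.Ioi m, ((1 + fn n x : ℝ) : ℂ) * (x : ℂ) ^ (-s - 1) := by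
    have : (∫ x in Set.Ioi m, ((1 + fn n x : ℝ) : ℂ) * (x : ℂ) ^ (-s - 1))
        = (1 / s + M * (eta s / s)) - 2 * ((((1:ℝ) : ℂ) ^ (-s) - ((2:ℝ) : ℂ) ^ (-s)) / s) := by
      rw [← hIoi1, hsplit1, hIoc1m]
      ring
    rw [this]
    have h2s : (2:ℂ) ^ (1 - s) = 2 * (2:ℂ) ^ (-s) := by
      rw [sub_eq_add_neg, Complex.cpow_add _ _ (two_ne_zero), Complex.cpow_one]
    have h1s : ((1:ℝ) : ℂ) ^ (-s) = 1 := by norm_num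
    have h2s' : ((2:ℝ) : ℂ) ^ (-s) = (2:ℂ) ^ (-s) := by norm_num
    rw [h1s, h2s', h2s]
    ring
  rw [hM', hid]
  -- the final estimate
  set C := ⨆ x : {x : ℝ // (n : ℝ) ≤ x}, |1 + fn n x| with hC
  have hbdd : BddAbove (Set.range fun x : {x : ℝ // (n : ℝ) ≤ x} => |1 + fn n x|) := by
    refine ⟨1 + n, ?_⟩
    rintro _ ⟨⟨x, hx⟩, rfl⟩
    exact h1fn_bd x (by linarith)
  have hCle : ∀ x : ℝ, (n:ℝ) ≤ x → |1 + fn n x| ≤ C :=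
    fun x hx => le_ciSup hbdd (⟨x, hx⟩ : {x : ℝ // (n : ℝ) ≤ x})
  have hC0 : 0 ≤ C := le_trans (abs_nonneg _) (hCle n le_rfl)
  have hre : -s.re - 1 < -1 := by linarith
  calc ‖∫ x in Set.Ioi m, ((1 + fn n x : ℝ) : ℂ) * (x : ℂ) ^ (-s - 1)‖
      = ‖∫ x in Set.Ioi m, ((1 + fn n x : ℝ) : ℂ) * (x : ℂ) ^ (-s - 1)‖ := rfl
    _ ≤ ∫ x in Set.Ioi m, ‖((1 + fn n x : ℝ) : ℂ) * (x : ℂ) ^ (-s - 1)‖ :=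
        norm_integral_le_integral_norm _
    _ ≤ ∫ x in Set.Ioi m, C * x ^ (-s.re - 1) := by
        refine setIntegral_mono_on ((hint m hm0).norm) ?_ measurableSet_Ioi ?_
        · exact (integrableOn_Ioi_rpow_of_lt hre hm0).const_mul C
        · intro x hx
          have hx0 : 0 < x := hm0.trans hx
          rw [norm_mul, Complex.norm_real, Real.norm_eq_abs,
            g_norm hx0]
          exact mul_le_mul_of_nonneg_right (hCle x (le_trans hnm hx.le))
            (Real.rpow_nonneg hx0.le _)
    _ = C * (m ^ (-s.re) / s.re) := by
        rw [integral_const_mul, integral_Ioi_rpow_of_lt hre hm0]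
        have he : -s.re - 1 + 1 = -s.re := by ring
        rw [he, neg_div_neg_eq]
    _ ≤ C / (s.re * (n:ℝ) ^ s.re) := by
        have h1 : (n:ℝ) ^ s.re ≤ m ^ s.re := Real.rpow_le_rpow hn0.le hnm hσ.le
        have hnp : (0:ℝ) < (n:ℝ) ^ s.re := Real.rpow_pos_of_pos hn0 _
        have hmne : m ^ (-s.re) = (m ^ s.re)⁻¹ := Real.rpow_neg hm0.le _
        have h2 : m ^ (-s.re) / s.re ≤ 1 / (s.re * (n:ℝ) ^ s.re) := by
          rw [hmne, inv_eq_one_div, div_div]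
          exact one_div_le_one_div_of_le (by positivity)
            (by calc s.re * (n:ℝ) ^ s.re ≤ s.re * m ^ s.re :=
                    mul_le_mul_of_nonneg_left h1 hσ.le
                _ = m ^ s.re * s.re := mul_comm _ _)
        calc C * (m ^ (-s.re) / s.re) ≤ C * (1 / (s.re * (n:ℝ) ^ s.re)) :=
              mul_le_mul_of_nonneg_left h2 hC0
          _ = C / (s.re * (n:ℝ) ^ s.re) := by rw [mul_one_div]
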